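/- arXiv:2106.09815 — 6 statements merged into one kernel-verified Lean document; each statement's English description precedes it below -/
import Mathlib

section
/- Let g : R^d → R be differentiable with L-Lipschitz gradient, let G : R^d → R^d satisfy ‖G(x) - ∇g(x)‖ ≤ a‖∇g(x)‖ + b for all x with a ≤ 1/20, and let η ≤ 1/L. Then for the iteration y_{t+1} = y_t - η·G(y_t) starting from y_0, for every t ≥ 0 one has g(y_t) - g(y_0) ≤ -(η(1-a)/8)·Σ_{i=0}^{t-1} ‖∇g(y_i)‖² + 5tηb². -/
open InnerProductSpace intervalIntegral

local notation "⟪" x ", " y "⟫" => @inner ℝ _ _ x y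

private lemma descent_bound {d : ℕ}
    (g : EuclideanSpace ℝ (Fin d) → ℝ) (g' : EuclideanSpace ℝ (Fin d) → EuclideanSpace ℝ (Fin d))
    (L : ℝ) (hL : 0 < L)
    (hgrad : ∀ x, HasGradientAt g (g' x) x)
    (hLip : ∀ x y, ‖g' x - g' y‖ ≤ L * ‖x - y‖)
    (x v : EuclideanSpace ℝ (Fin d)) :
    g (x + v) ≤ g x + ⟪g' x, v⟫ + L / 2 * ‖v‖ ^ 2 := by
  have hgcont : Continuous g' :=
    (LipschitzWith.of_dist_le_mul (K := ⟨L, hL.le⟩) fun p q => by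
      rw [dist_eq_norm, dist_eq_norm]; exact hLip p q).continuous
  have hderiv : ∀ s : ℝ, HasDerivAt (fun s : ℝ => g (x + s • v)) ⟪g' (x + s • v), v⟫ s := by
    intro s
    have hline : HasDerivAt (fun s : ℝ => x + s • v) v s := by
      simpa using ((hasDerivAt_id s).smul_const v).const_add x
    have := ((hgrad (x + s • v)).hasFDerivAt.comp_hasDerivAt s hline)
    simpa [InnerProductSpace.toDual_apply_apply, Function.comp_def] using this
  have hlinec : Continuous fun s : ℝ => x + s • v :=
    continuous_const.add (continuous_id.smul continuous_const)
  have hcont : Continuous fun s : ℝ => ⟪g' (x + s • v), v⟫ :=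
    (hgcont.comp hlinec).inner continuous_const
  have hcont2 : Continuous fun s : ℝ => ⟪g' x, v⟫ + L * s * ‖v‖ ^ 2 :=
    continuous_const.add ((continuous_const.mul continuous_id).mul continuous_const)
  have heq : g (x + v) - g x = ∫ s in (0:ℝ)..1, ⟪g' (x + s • v), v⟫ := by
    rw [integral_eq_sub_of_hasDerivAt (fun s _ => hderiv s) (hcont.intervalIntegrable 0 1)]
    simp
  have hbound : (∫ s in (0:ℝ)..1, ⟪g' (x + s • v), v⟫)
      ≤ ∫ s in (0:ℝ)..1, (⟪g' x, v⟫ + L * s * ‖v‖ ^ 2) := by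
    apply integral_mono_on (by norm_num) (hcont.intervalIntegrable 0 1)
      (hcont2.intervalIntegrable 0 1)
    intro s hs
    rw [Set.mem_Icc] at hs
    have h1 : ⟪g' (x + s • v) - g' x, v⟫ ≤ L * s * ‖v‖ ^ 2 := by
      calc ⟪g' (x + s • v) - g' x, v⟫ ≤ ‖g' (x + s • v) - g' x‖ * ‖v‖ :=
            real_inner_le_norm _ _
        _ ≤ (L * ‖(x + s • v) - x‖) * ‖v‖ := by
            have := hLip (x + s • v) x
            nlinarith [norm_nonneg v]
        _ = L * s * ‖v‖ ^ 2 := by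
            rw [add_sub_cancel_left, norm_smul, Real.norm_eq_abs, abs_of_nonneg hs.1]
            ring
    have h2 : ⟪g' (x + s • v), v⟫ = ⟪g' x, v⟫ + ⟪g' (x + s • v) - g' x, v⟫ := by
      rw [inner_sub_left]; ring
    linarith
  have hval : (∫ s in (0:ℝ)..1, (⟪g' x, v⟫ + L * s * ‖v‖ ^ 2)) = ⟪g' x, v⟫ + L / 2 * ‖v‖ ^ 2 := by
    have hc2 : Continuous fun s : ℝ => L * s * ‖v‖ ^ 2 :=
      (continuous_const.mul continuous_id).mul continuous_const
    rw [integral_add intervalIntegrable_const (hc2.intervalIntegrable 0 1),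
      integral_const,
      show (fun s : ℝ => L * s * ‖v‖ ^ 2) = fun s : ℝ => (L * ‖v‖ ^ 2) * s by ext s; ring,
      integral_const_mul, integral_id]
    simp
    ring
  linarith [heq, hbound.trans_eq hval]

set_option maxHeartbeats 1000000 in
theorem inexact_descent_lemma {d : ℕ}
    (g : EuclideanSpace ℝ (Fin d) → ℝ) (g' G : EuclideanSpace ℝ (Fin d) → EuclideanSpace ℝ (Fin d))
    (L a b η : ℝ) (hL : 0 < L)
    (hgrad : ∀ x, HasGradientAt g (g' x) x)
    (hLip : ∀ x y, ‖g' x - g' y‖ ≤ L * ‖x - y‖)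
    (ha0 : 0 ≤ a) (ha : a ≤ 1/20) (hb : 0 ≤ b)
    (hη0 : 0 < η) (hη : η ≤ 1 / L)
    (horacle : ∀ x, ‖G x - g' x‖ ≤ a * ‖g' x‖ + b)
    (y : ℕ → EuclideanSpace ℝ (Fin d))
    (hiter : ∀ t, y (t + 1) = y t - η • G (y t)) :
    ∀ t, g (y t) - g (y 0) ≤
      -(η * (1 - a) / 8) * ∑ i ∈ Finset.range t, ‖g' (y i)‖^2 + 5 * t * η * b^2 := by
  have hstep : ∀ t, g (y (t + 1)) - g (y t) ≤
      -(η * (1 - a) / 8) * ‖g' (y t)‖ ^ 2 + 5 * η * b ^ 2 := by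
    intro t
    set x := y t
    set w := g' x with hw
    set u := G x with hu
    have hdes : g (x + (-η • u)) ≤ g x + ⟪w, -η • u⟫ + L / 2 * ‖-η • u‖ ^ 2 :=
      descent_bound g g' L hL hgrad hLip x (-η • u)
    have hx1 : y (t + 1) = x + (-η • u) := by
      rw [hiter t]; module
    have hnorm : ‖-η • u‖ ^ 2 = η ^ 2 * ‖u‖ ^ 2 := by
      rw [norm_smul, Real.norm_eq_abs, abs_neg, abs_of_pos hη0]
      ring
    have hinner : ⟪w, -η • u⟫ = -η * ⟪w, u⟫ := by
      rw [inner_smul_right]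
    have hηL : η * L ≤ 1 := by
      have := (le_div_iff₀ hL).1 hη
      linarith
    -- key quadratic identity: -⟪w,u⟫ + ½‖u‖² = ½‖u-w‖² - ½‖w‖²
    have hid : ‖u - w‖ ^ 2 = ‖u‖ ^ 2 - 2 * ⟪w, u⟫ + ‖w‖ ^ 2 := by
      have h := @norm_sub_sq_real (EuclideanSpace ℝ (Fin d)) _ _ u w
      rw [real_inner_comm] at h
      linarith
    have horc := horacle x
    have horc2 : ‖u - w‖ ^ 2 ≤ 2 * a ^ 2 * ‖w‖ ^ 2 + 2 * b ^ 2 := by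
      have h0 : (0:ℝ) ≤ ‖u - w‖ := norm_nonneg _
      nlinarith [norm_nonneg w, sq_nonneg (a * ‖w‖ - b)]
    have hG2 : g (y (t + 1)) - g x ≤
        -η * ⟪w, u⟫ + η / 2 * ‖u‖ ^ 2 := by
      rw [hx1]
      have : L / 2 * (η ^ 2 * ‖u‖ ^ 2) ≤ η / 2 * ‖u‖ ^ 2 := by
        nlinarith [sq_nonneg ‖u‖, hη0.le]
      calc g (x + (-η • u)) - g x ≤ ⟪w, -η • u⟫ + L / 2 * ‖-η • u‖ ^ 2 := by linarith
        _ ≤ -η * ⟪w, u⟫ + η / 2 * ‖u‖ ^ 2 := by rw [hinner, hnorm]; linarith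
    have hkey : -η * ⟪w, u⟫ + η / 2 * ‖u‖ ^ 2 = η / 2 * ‖u - w‖ ^ 2 - η / 2 * ‖w‖ ^ 2 := by
      rw [hid]; ring
    have hfinal : η / 2 * ‖u - w‖ ^ 2 - η / 2 * ‖w‖ ^ 2 ≤
        -(η * (1 - a) / 8) * ‖w‖ ^ 2 + 5 * η * b ^ 2 := by
      have h1 : η / 2 * ‖u - w‖ ^ 2 ≤ η / 2 * (2 * a ^ 2 * ‖w‖ ^ 2 + 2 * b ^ 2) :=
        mul_le_mul_of_nonneg_left horc2 (by positivity)
      have hc : a ^ 2 - 1 / 2 + (1 - a) / 8 ≤ 0 := by nlinarith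
      have h2 : η * ‖w‖ ^ 2 * (a ^ 2 - 1 / 2 + (1 - a) / 8) ≤ 0 :=
        mul_nonpos_of_nonneg_of_nonpos (mul_nonneg hη0.le (sq_nonneg _)) hc
      have h3 : 0 ≤ η * b ^ 2 := by positivity
      linarith [h1, h2, h3]
    linarith
  intro t
  induction t with
  | zero => simp
  | succ n ih =>
    rw [Finset.sum_range_succ]
    have := hstep n
    push_cast
    linarith
end

section
/- Under the hypotheses of the inexact descent lemma (g with L-Lipschitz gradient, (a,b)-inexact oracle with a ≤ 1/20, η ≤ 1/L, iterates y_{t+1} = y_t - ηG(y_t)), for all τ ≤ t one has ‖y_τ - y_0‖² ≤ 16ηt·((1+a)²/(1-a))·( g(y_0) - g(y_t) + (5 + η)·t·b² ). -/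
open Finset

local notation "⟪" x ", " y "⟫" => @inner ℝ _ _ x y

lemma descent_aux {d : ℕ}
    (g : EuclideanSpace ℝ (Fin d) → ℝ) (g' : EuclideanSpace ℝ (Fin d) → EuclideanSpace ℝ (Fin d))
    (L : ℝ)
    (hgrad : ∀ x, HasGradientAt g (g' x) x)
    (hLip : ∀ x y, ‖g' x - g' y‖ ≤ L * ‖x - y‖)
    (x v : EuclideanSpace ℝ (Fin d)) :
    g (x + v) ≤ g x + ⟪g' x, v⟫ + L / 2 * ‖v‖ ^ 2 := by
  set I : ℝ := ⟪g' x, v⟫ with hI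
  have hc : ∀ t : ℝ, HasDerivAt (fun t : ℝ => x + t • v) v t := by
    intro t
    simpa using ((hasDerivAt_id t).smul_const v).const_add x
  have hφ : ∀ t : ℝ, HasDerivAt (fun t : ℝ => g (x + t • v)) ⟪g' (x + t • v), v⟫ t := by
    intro t
    have h1 := (hgrad (x + t • v)).hasFDerivAt
    have h2 := h1.comp_hasDerivAt t (hc t)
    simp [InnerProductSpace.toDual_apply_apply] at h2
    exact h2
  set ψ : ℝ → ℝ := fun t => g (x + t • v) - t * I - L / 2 * ‖v‖ ^ 2 * t ^ 2 with hψdef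
  have hψ : ∀ t : ℝ, HasDerivAt ψ (⟪g' (x + t • v), v⟫ - I - L / 2 * ‖v‖ ^ 2 * (2 * t)) t := by
    intro t
    have h3 : HasDerivAt (fun t : ℝ => t * I) I t := by
      simpa using (hasDerivAt_id t).mul_const I
    have h4 : HasDerivAt (fun t : ℝ => L / 2 * ‖v‖ ^ 2 * t ^ 2) (L / 2 * ‖v‖ ^ 2 * (2 * t)) t := by
      have := (hasDerivAt_pow 2 t).const_mul (L / 2 * ‖v‖ ^ 2)
      simpa [mul_comm, mul_assoc, mul_left_comm] using this
    exact ((hφ t).sub h3).sub h4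
  have hanti : AntitoneOn ψ (Set.Icc (0:ℝ) 1) := by
    apply antitoneOn_of_deriv_nonpos (convex_Icc 0 1)
    · exact fun t _ => ((hψ t).continuousAt).continuousWithinAt
    · exact fun t _ => ((hψ t).differentiableAt).differentiableWithinAt
    · intro t ht
      rw [interior_Icc] at ht
      rw [(hψ t).deriv]
      have hinner : ⟪g' (x + t • v), v⟫ - I ≤ L * t * ‖v‖ ^ 2 := by
        have h5 : ⟪g' (x + t • v), v⟫ - I = ⟪g' (x + t • v) - g' x, v⟫ := by
          rw [hI, inner_sub_left]
        rw [h5]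
        calc ⟪g' (x + t • v) - g' x, v⟫ ≤ ‖g' (x + t • v) - g' x‖ * ‖v‖ := real_inner_le_norm _ _
          _ ≤ (L * ‖(x + t • v) - x‖) * ‖v‖ :=
              mul_le_mul_of_nonneg_right (hLip _ _) (norm_nonneg _)
          _ = L * t * ‖v‖ ^ 2 := by
              rw [add_sub_cancel_left, norm_smul, Real.norm_eq_abs, abs_of_pos ht.1]
              ring
      nlinarith [sq_nonneg ‖v‖, ht.1.le]
  have h01 := hanti (Set.mem_Icc.2 ⟨le_refl 0, zero_le_one⟩)
    (Set.mem_Icc.2 ⟨zero_le_one, le_refl 1⟩) zero_le_one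
  simp only [hψdef, zero_smul, one_smul, add_zero, zero_mul, mul_zero] at h01
  nlinarith [h01]

set_option maxHeartbeats 1000000 in
theorem improve_or_localize {d : ℕ}
    (g : EuclideanSpace ℝ (Fin d) → ℝ) (g' G : EuclideanSpace ℝ (Fin d) → EuclideanSpace ℝ (Fin d))
    (L a b η : ℝ) (hL : 0 < L)
    (hgrad : ∀ x, HasGradientAt g (g' x) x)
    (hLip : ∀ x y, ‖g' x - g' y‖ ≤ L * ‖x - y‖)
    (ha0 : 0 ≤ a) (ha : a ≤ 1/20) (hb : 0 ≤ b)
    (hη0 : 0 < η) (hη : η ≤ 1 / L)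
    (horacle : ∀ x, ‖G x - g' x‖ ≤ a * ‖g' x‖ + b)
    (y : ℕ → EuclideanSpace ℝ (Fin d))
    (hiter : ∀ t, y (t + 1) = y t - η • G (y t)) :
    ∀ τ t : ℕ, τ ≤ t →
      ‖y τ - y 0‖^2 ≤
        16 * η * t * ((1 + a)^2 / (1 - a)) * (g (y 0) - g (y t) + (5 + η) * t * b^2) := by
  have hLη : L * η ≤ 1 := by
    rw [le_div_iff₀ hL] at hη
    linarith
  -- per-step descent
  have hstep : ∀ s : ℕ, g (y (s+1)) ≤ g (y s) - η/6 * ‖G (y s)‖^2 + η * b^2 := by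
    intro s
    set x := y s
    set N := ‖G x‖ with hN
    set D := ‖g' x‖ with hDdef
    have hNn : 0 ≤ N := norm_nonneg _
    have hDn : 0 ≤ D := norm_nonneg _
    have hbn : 0 ≤ b := hb
    have hyx : y (s+1) = x + (-η) • G x := by
      rw [hiter s, sub_eq_add_neg, neg_smul]
    have hdes := descent_aux g g' L hgrad hLip x ((-η) • G x)
    rw [← hyx] at hdes
    have hnorm : ‖(-η) • G x‖ = η * N := by
      rw [norm_smul, Real.norm_eq_abs, abs_neg, abs_of_pos hη0]
    rw [hnorm] at hdes
    have hip : ⟪g' x, (-η) • G x⟫ = -η * ⟪g' x, G x⟫ := real_inner_smul_right _ _ _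
    rw [hip] at hdes
    have hIP : ⟪g' x, G x⟫ ≥ N^2 - (a * D + b) * N := by
      have e1 : ⟪g' x, G x⟫ = ⟪G x, G x⟫ + ⟪g' x - G x, G x⟫ := by
        rw [inner_sub_left]; ring
      have e2 : ⟪G x, G x⟫ = N^2 := real_inner_self_eq_norm_sq _
      have e3 : ⟪g' x - G x, G x⟫ ≥ -((a * D + b) * N) := by
        have := real_inner_le_norm (G x - g' x) (G x)
        have h4 : ⟪g' x - G x, G x⟫ = -⟪G x - g' x, G x⟫ := by
          rw [← inner_neg_left]; congr 1; abel
        have h5 : ‖G x - g' x‖ * ‖G x‖ ≤ (a * D + b) * N := by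
          apply mul_le_mul_of_nonneg_right (horacle x) hNn
        nlinarith [this, h5]
      rw [ge_iff_le, e1, e2]
      linarith [e3]
    have hD : D ≤ N + (a * D + b) := by
      have : ‖g' x‖ ≤ ‖G x‖ + ‖G x - g' x‖ := by
        have := norm_sub_le (G x) (G x - g' x)
        simpa using this
      linarith [this, horacle x]
    have haD : a * D ≤ (N + b) / 19 := by
      nlinarith [mul_nonneg hDn (by linarith : (0:ℝ) ≤ 1 - 20 * a)]
    have hQ : 0 ≤ N^2/3 - a*D*N - b*N + b^2 := by
      nlinarith [mul_le_mul_of_nonneg_right haD hNn, sq_nonneg (8*N - 15*b)]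
    have hIPη : η * ⟪g' x, G x⟫ ≥ η * (N^2 - (a * D + b) * N) :=
      mul_le_mul_of_nonneg_left hIP hη0.le
    have hLbd : (0:ℝ) ≤ (1 - L * η) * (η * N^2) :=
      mul_nonneg (by linarith) (by positivity)
    nlinarith [hdes, hIPη, hLbd, mul_nonneg hη0.le hQ]
  -- summed descent
  have hsum : ∀ t : ℕ, η/6 * ∑ s ∈ range t, ‖G (y s)‖^2 ≤
      g (y 0) - g (y t) + t * (η * b^2) := by
    intro t
    induction t with
    | zero => simp
    | succ t ih =>
      rw [sum_range_succ]
      have := hstep t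
      push_cast
      nlinarith [ih, this]
  intro τ t hτt
  set Δ := g (y 0) - g (y t) with hΔ
  set P := ∑ s ∈ range t, ‖G (y s)‖^2 with hP
  set Pτ := ∑ s ∈ range τ, ‖G (y s)‖^2 with hPτ
  clear_value Δ P Pτ
  have hPn : 0 ≤ P := by
    rw [hP]; exact Finset.sum_nonneg fun i _ => sq_nonneg _
  have hPτn : 0 ≤ Pτ := by
    rw [hPτ]; exact Finset.sum_nonneg fun i _ => sq_nonneg _
  have hPmono : Pτ ≤ P := by
    rw [hP, hPτ]
    exact Finset.sum_le_sum_of_subset_of_nonneg (Finset.range_subset_range.2 hτt)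
      (fun i _ _ => sq_nonneg _)
  have hA : ‖y τ - y 0‖ ≤ ∑ s ∈ range τ, η * ‖G (y s)‖ := by
    have h1 : y τ - y 0 = ∑ s ∈ range τ, (y (s+1) - y s) :=
      (Finset.sum_range_sub (fun i => y i) τ).symm
    rw [h1]
    refine (norm_sum_le _ _).trans (le_of_eq (Finset.sum_congr rfl fun s _ => ?_))
    rw [hiter s]
    rw [sub_sub_cancel_left, norm_neg, norm_smul, Real.norm_eq_abs, abs_of_pos hη0]
  have hB : ‖y τ - y 0‖^2 ≤ (∑ s ∈ range τ, η * ‖G (y s)‖)^2 :=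
    pow_le_pow_left₀ (norm_nonneg _) hA 2
  have hC : (∑ s ∈ range τ, η * ‖G (y s)‖)^2 ≤ (τ:ℝ) * ∑ s ∈ range τ, (η * ‖G (y s)‖)^2 := by
    have := sq_sum_le_card_mul_sum_sq (s := range τ) (f := fun s => η * ‖G (y s)‖)
    simpa using this
  have hC' : (τ:ℝ) * ∑ s ∈ range τ, (η * ‖G (y s)‖)^2 = (τ:ℝ) * (η^2 * Pτ) := by
    have he : ∑ s ∈ range τ, (η * ‖G (y s)‖)^2 = η^2 * Pτ := by
      rw [hPτ, Finset.mul_sum]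
      exact Finset.sum_congr rfl fun s _ => by ring
    rw [he]
  have hX : ‖y τ - y 0‖^2 ≤ (t:ℝ) * (η^2 * P) := by
    have hτr : (τ:ℝ) ≤ (t:ℝ) := Nat.cast_le.2 hτt
    have h2 : (τ:ℝ) * (η^2 * Pτ) ≤ (t:ℝ) * (η^2 * P) :=
      mul_le_mul hτr (mul_le_mul_of_nonneg_left hPmono (sq_nonneg η))
        (mul_nonneg (sq_nonneg η) hPτn) (Nat.cast_nonneg _)
    calc ‖y τ - y 0‖^2 ≤ (τ:ℝ) * (η^2 * Pτ) := by rw [← hC']; exact hB.trans hC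
      _ ≤ (t:ℝ) * (η^2 * P) := h2
  have heq : η/6 * P = (η * P)/6 := by ring
  have h7 : η * P ≤ 6*Δ + 6*((t:ℝ)*η*b^2) := by
    have h := hsum t
    rw [← hP, ← hΔ] at h
    have heq2 : (t:ℝ) * (η * b^2) = (t:ℝ)*η*b^2 := by ring
    linarith [heq, heq2, h]
  have hΔlb : -((t:ℝ)*η*b^2) ≤ Δ := by
    have h := hsum t
    rw [← hP, ← hΔ] at h
    have h0 : 0 ≤ η/6 * P := mul_nonneg (by positivity) hPn
    have heq2 : (t:ℝ) * (η * b^2) = (t:ℝ)*η*b^2 := by ring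
    linarith [h, h0, heq2]
  have hK : 1 ≤ (1 + a)^2 / (1 - a) := by
    rw [le_div_iff₀ (by linarith : (0:ℝ) < 1 - a)]
    nlinarith
  set K := (1 + a)^2 / (1 - a) with hKdef
  clear_value K
  have htn : (0:ℝ) ≤ (t:ℝ) := Nat.cast_nonneg _
  have hfin : (t:ℝ) * (η^2 * P) ≤ 16 * η * t * K * (Δ + (5 + η) * t * b^2) := by
    have h8 : (t:ℝ) * (η^2 * P) ≤ (t:ℝ) * η * (6*Δ + 6*((t:ℝ)*η*b^2)) := by
      have h := mul_le_mul_of_nonneg_left h7 (mul_nonneg htn hη0.le)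
      calc (t:ℝ) * (η^2 * P) = (t:ℝ) * η * (η * P) := by ring
        _ ≤ (t:ℝ) * η * (6*Δ + 6*((t:ℝ)*η*b^2)) := h
    have h9 : (t:ℝ) * η * (6*Δ + 6*((t:ℝ)*η*b^2)) ≤ 16 * η * t * K * (Δ + (5 + η) * t * b^2) := by
      have hc1 : (0:ℝ) ≤ η * (t:ℝ) * ((16*K - 6) * (Δ + (t:ℝ)*η*b^2)) :=
        mul_nonneg (mul_nonneg hη0.le htn)
          (mul_nonneg (by linarith) (by linarith))
      have hc2 : (0:ℝ) ≤ 80 * K * η * (t:ℝ) * ((t:ℝ) * b^2) :=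
        mul_nonneg (mul_nonneg (mul_nonneg (by linarith) hη0.le) htn)
          (mul_nonneg htn (sq_nonneg b))
      nlinarith [hc1, hc2]
    linarith
  exact hX.trans hfin
end

section
/- Let g : R^d → R ∪ {∞} be α-strongly convex with minimizer x*, and let {g_x} be a family of convex models satisfying |g_x(y) - g(y)| ≤ (q/2)‖y - x‖² for all x, y. For θ > q, the iteration x_{k+1} = argmin_x { g_{x_k}(x) + (θ/2)‖x - x_k‖² } satisfies ‖x_{k+1} - x*‖ ≤ ((θ+q)/(α+θ))^{(k+1)/2} ‖x_0 - x*‖. -/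
/-- `g` is `α`-strongly convex, with extended-real values. -/
def StrongConvexOnE {d : ℕ} (α : ℝ) (g : EuclideanSpace ℝ (Fin d) → EReal) : Prop :=
  ∀ x y : EuclideanSpace ℝ (Fin d), ∀ s t : ℝ, 0 ≤ s → 0 ≤ t → s + t = 1 →
    g (s • x + t • y) + ((α/2 * s * t * ‖x - y‖^2 : ℝ) : EReal) ≤
      (s : EReal) * g x + (t : EReal) * g y

/-- `g` is convex, with extended-real values. -/
def ConvexOnE {d : ℕ} (g : EuclideanSpace ℝ (Fin d) → EReal) : Prop :=
  ∀ x y : EuclideanSpace ℝ (Fin d), ∀ s t : ℝ, 0 ≤ s → 0 ≤ t → s + t = 1 →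
    g (s • x + t • y) ≤ (s : EReal) * g x + (t : EReal) * g y

lemma tends_aux {a b C : ℝ} (hC : 0 ≤ C)
    (h : ∀ t : ℝ, 0 < t → t ≤ 1 → a ≤ b + t * C) : a ≤ b := by
  refine le_of_forall_pos_le_add fun ε hε => ?_
  have ht0 : 0 < min 1 (ε / (C + 1)) := lt_min one_pos (by positivity)
  have := h (min 1 (ε / (C + 1))) ht0 (min_le_left _ _)
  have h2 : min 1 (ε / (C + 1)) * C ≤ ε := by
    have h3 : min 1 (ε / (C + 1)) ≤ ε / (C + 1) := min_le_right _ _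
    have h4 : ε / (C + 1) * C ≤ ε := by
      rw [div_mul_eq_mul_div, div_le_iff₀ (by linarith)]
      nlinarith
    nlinarith
  linarith

open RealInnerProductSpace in
lemma step_aux {d : ℕ} (α q θ : ℝ) (hα : 0 < α) (hq : 0 ≤ q) (hθ : q < θ)
    (g : EuclideanSpace ℝ (Fin d) → EReal) (m : EuclideanSpace ℝ (Fin d) → EReal)
    (hbot : ∀ y, g y ≠ ⊥)
    (hsc : StrongConvexOnE α g)
    (xstar : EuclideanSpace ℝ (Fin d)) (hmin : ∀ z, g xstar ≤ g z) (hgs : g xstar ≠ ⊤)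
    (hconv : ConvexOnE m)
    (a b : EuclideanSpace ℝ (Fin d))
    (hacc : ∀ y, m y ≤ g y + ((q/2 * ‖y - a‖^2 : ℝ) : EReal) ∧
        g y ≤ m y + ((q/2 * ‖y - a‖^2 : ℝ) : EReal))
    (hit : ∀ z, m b + ((θ/2 * ‖b - a‖^2 : ℝ) : EReal) ≤ m z + ((θ/2 * ‖z - a‖^2 : ℝ) : EReal)) :
    (α + θ) * ‖b - xstar‖^2 ≤ (θ + q) * ‖xstar - a‖^2 := by
  obtain ⟨Gs, hGs⟩ : ∃ r : ℝ, g xstar = (r : EReal) :=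
    ⟨_, (EReal.coe_toReal hgs (hbot xstar)).symm⟩
  have hms_t : m xstar ≠ ⊤ := by
    have h := (hacc xstar).1
    rw [hGs, ← EReal.coe_add] at h
    exact (h.trans_lt (EReal.coe_lt_top _)).ne
  have hms_b : m xstar ≠ ⊥ := by
    intro hb
    have h := (hacc xstar).2
    rw [hb, EReal.bot_add] at h
    exact hbot xstar (le_bot_iff.mp h)
  obtain ⟨Ms, hMs⟩ : ∃ r : ℝ, m xstar = (r : EReal) :=
    ⟨_, (EReal.coe_toReal hms_t hms_b).symm⟩
  have hmb_b : m b ≠ ⊥ := by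
    intro hb
    have h := (hacc b).2
    rw [hb, EReal.bot_add] at h
    exact hbot b (le_bot_iff.mp h)
  have hmb_t : m b ≠ ⊤ := by
    intro ht
    have h := hit xstar
    rw [ht, EReal.top_add_coe, hMs, ← EReal.coe_add] at h
    exact (EReal.coe_lt_top _).not_ge h
  obtain ⟨Mb, hMb⟩ : ∃ r : ℝ, m b = (r : EReal) :=
    ⟨_, (EReal.coe_toReal hmb_t hmb_b).symm⟩
  have hgb_t : g b ≠ ⊤ := by
    have h := (hacc b).2
    rw [hMb, ← EReal.coe_add] at h
    exact (h.trans_lt (EReal.coe_lt_top _)).ne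
  obtain ⟨Gb, hGb⟩ : ∃ r : ℝ, g b = (r : EReal) :=
    ⟨_, (EReal.coe_toReal hgb_t (hbot b)).symm⟩
  -- real-valued model accuracy
  have hGb_acc : Gb ≤ Mb + q/2 * ‖b - a‖^2 := by
    have h := (hacc b).2
    rw [hGb, hMb, ← EReal.coe_add, EReal.coe_le_coe_iff] at h
    exact h
  have hMs_acc : Ms ≤ Gs + q/2 * ‖xstar - a‖^2 := by
    have h := (hacc xstar).1
    rw [hGs, hMs, ← EReal.coe_add, EReal.coe_le_coe_iff] at h
    exact h
  -- strong convexity gap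
  have hgap : α/2 * ‖xstar - b‖^2 ≤ Gb - Gs := by
    have key : ∀ t : ℝ, 0 < t → t ≤ 1 →
        α/2 * ‖xstar - b‖^2 - (Gb - Gs) ≤ 0 + t * (α/2 * ‖xstar - b‖^2) := by
      intro t ht0 ht1
      have hs0 : (0:ℝ) ≤ 1 - t := by linarith
      have h1 := hsc xstar b (1-t) t hs0 ht0.le (by ring)
      rw [hGs, hGb] at h1
      have h2 : (Gs : EReal) ≤ g ((1-t) • xstar + t • b) := hGs ▸ hmin _
      have h3 : ((Gs + α/2*(1-t)*t*‖xstar - b‖^2 : ℝ) : EReal) ≤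
          (((1-t)*Gs + t*Gb : ℝ) : EReal) := by
        push_cast
        calc (Gs : EReal) + ((α/2*(1-t)*t*‖xstar - b‖^2 : ℝ) : EReal)
            ≤ g ((1-t) • xstar + t • b) + ((α/2*(1-t)*t*‖xstar - b‖^2 : ℝ) : EReal) :=
              add_le_add_left h2 _
          _ ≤ ((1-t : ℝ) : EReal) * (Gs : EReal) + ((t : ℝ) : EReal) * (Gb : EReal) := h1
      rw [EReal.coe_le_coe_iff] at h3
      nlinarith [h3, ht0, sq_nonneg ‖xstar - b‖]
    have := tends_aux (C := α/2 * ‖xstar - b‖^2)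
      (mul_nonneg (by linarith) (sq_nonneg _)) key
    linarith
  -- proximal inequality
  have hprox : Mb - Ms ≤ θ * ⟪b - a, xstar - b⟫ := by
    have key : ∀ t : ℝ, 0 < t → t ≤ 1 →
        Mb - Ms - θ * ⟪b - a, xstar - b⟫ ≤ 0 + t * (θ/2 * ‖xstar - b‖^2) := by
      intro t ht0 ht1
      set z := (1-t) • b + t • xstar with hz
      have hs0 : (0:ℝ) ≤ 1 - t := by linarith
      have hcv := hconv b xstar (1-t) t hs0 ht0.le (by ring)
      rw [hMb, hMs] at hcv
      have hcv' : m z ≤ (((1-t)*Mb + t*Ms : ℝ) : EReal) := by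
        push_cast
        exact hcv
      have hz_t : m z ≠ ⊤ := (hcv'.trans_lt (EReal.coe_lt_top _)).ne
      have hz_b : m z ≠ ⊥ := by
        intro hb
        have h := hit z
        rw [hb, EReal.bot_add, hMb, ← EReal.coe_add] at h
        exact (EReal.bot_lt_coe _).not_ge h
      obtain ⟨Mz, hMz⟩ : ∃ r : ℝ, m z = (r : EReal) :=
        ⟨_, (EReal.coe_toReal hz_t hz_b).symm⟩
      have hit' : Mb + θ/2 * ‖b - a‖^2 ≤ Mz + θ/2 * ‖z - a‖^2 := by
        have h := hit z
        rw [hMb, hMz, ← EReal.coe_add, ← EReal.coe_add, EReal.coe_le_coe_iff] at h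
        exact h
      have hcv'' : Mz ≤ (1-t)*Mb + t*Ms := by
        rw [hMz, EReal.coe_le_coe_iff] at hcv'
        exact hcv'
      have hnorm : ‖z - a‖^2 = ‖b - a‖^2 + 2*t*⟪b - a, xstar - b⟫ + t^2*‖xstar - b‖^2 := by
        have hz2 : z - a = (b - a) + t • (xstar - b) := by rw [hz]; module
        rw [hz2, norm_add_sq_real, real_inner_smul_right, norm_smul]
        simp only [Real.norm_eq_abs]
        rw [mul_pow, sq_abs]
        ring
      rw [hnorm] at hit'
      nlinarith [hit', hcv'', ht0]
    have := tends_aux (C := θ/2 * ‖xstar - b‖^2)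
      (mul_nonneg (by linarith) (sq_nonneg _)) key
    linarith
  have hid : ‖xstar - a‖^2 = ‖b - a‖^2 + 2*⟪b - a, xstar - b⟫ + ‖xstar - b‖^2 := by
    have h : xstar - a = (b - a) + (xstar - b) := by module
    rw [h, norm_add_sq_real]
  have hrev : ‖xstar - b‖^2 = ‖b - xstar‖^2 := by rw [norm_sub_rev]
  nlinarith [mul_nonneg (sub_nonneg.mpr hθ.le) (sq_nonneg ‖b - a‖),
    hgap, hprox, hGb_acc, hMs_acc, hid, hrev]

theorem two_sided_model_linear_convergence {d : ℕ} (α q θ : ℝ)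
    (hα : 0 < α) (hq : 0 ≤ q) (hθ : q < θ)
    (g : EuclideanSpace ℝ (Fin d) → EReal)
    (model : EuclideanSpace ℝ (Fin d) → EuclideanSpace ℝ (Fin d) → EReal)
    (hproper : (∀ x, g x ≠ ⊥) ∧ ∃ x, g x ≠ ⊤)
    (hclosed : LowerSemicontinuous g)
    (hsc : StrongConvexOnE α g)
    (xstar : EuclideanSpace ℝ (Fin d))
    (hmin : ∀ z, g xstar ≤ g z)
    (hmodel_convex : ∀ x, ConvexOnE (model x))
    (hmodel_acc : ∀ x y, model x y ≤ g y + ((q/2 * ‖y - x‖^2 : ℝ) : EReal) ∧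
        g y ≤ model x y + ((q/2 * ‖y - x‖^2 : ℝ) : EReal))
    (x : ℕ → EuclideanSpace ℝ (Fin d))
    (hiter : ∀ k, ∀ z,
      model (x k) (x (k+1)) + ((θ/2 * ‖x (k+1) - x k‖^2 : ℝ) : EReal) ≤
        model (x k) z + ((θ/2 * ‖z - x k‖^2 : ℝ) : EReal)) :
    ∀ k : ℕ, ‖x (k+1) - xstar‖ ≤
      ((θ + q)/(α + θ)) ^ (((k : ℝ) + 1)/2) * ‖x 0 - xstar‖ := by
  obtain ⟨hbot, x0, hx0⟩ := hproper
  have hgs : g xstar ≠ ⊤ := by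
    intro h
    exact hx0 (top_le_iff.mp (h ▸ hmin x0))
  set ρ : ℝ := (θ + q)/(α + θ) with hρ
  have hρ0 : 0 ≤ ρ := div_nonneg (by linarith) (by linarith)
  have hαθ : 0 < α + θ := by linarith
  have hstep : ∀ k, ‖x (k+1) - xstar‖^2 ≤ ρ * ‖x k - xstar‖^2 := by
    intro k
    have h := step_aux α q θ hα hq hθ g (model (x k)) hbot hsc xstar hmin hgs
      (hmodel_convex (x k)) (x k) (x (k+1)) (fun y => hmodel_acc (x k) y) (hiter k)
    rw [norm_sub_rev xstar (x k)] at h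
    rw [hρ, div_mul_eq_mul_div, le_div_iff₀ hαθ]
    nlinarith [h]
  have hkey : ∀ k : ℕ, ‖x (k+1) - xstar‖^2 ≤ ρ^(k+1) * ‖x 0 - xstar‖^2 := by
    intro k
    induction k with
    | zero => simpa using hstep 0
    | succ n ih =>
      calc ‖x (n+2) - xstar‖^2 ≤ ρ * ‖x (n+1) - xstar‖^2 := hstep (n+1)
        _ ≤ ρ * (ρ^(n+1) * ‖x 0 - xstar‖^2) := by
            exact mul_le_mul_of_nonneg_left ih hρ0
        _ = ρ^(n+2) * ‖x 0 - xstar‖^2 := by ring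
  intro k
  have h1 : ‖x (k+1) - xstar‖ = Real.sqrt (‖x (k+1) - xstar‖^2) :=
    (Real.sqrt_sq (norm_nonneg _)).symm
  rw [h1]
  have h2 : Real.sqrt (‖x (k+1) - xstar‖^2) ≤ Real.sqrt (ρ^(k+1) * ‖x 0 - xstar‖^2) :=
    Real.sqrt_le_sqrt (hkey k)
  refine h2.trans (le_of_eq ?_)
  rw [Real.sqrt_mul (pow_nonneg hρ0 _), Real.sqrt_sq (norm_nonneg _)]
  congr 1
  rw [Real.sqrt_eq_rpow, ← Real.rpow_natCast ρ (k+1), ← Real.rpow_mul hρ0]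
  push_cast
  ring_nf
end

section
/- One step of the two-sided model iteration contracts in the following sense: with g α-strongly convex with minimizer x*, g_{x_k} convex with |g_{x_k}(y) - g(y)| ≤ (q/2)‖y - x_k‖², θ > q, and x_{k+1} = argmin { g_{x_k}(x) + (θ/2)‖x - x_k‖² }, one has g(x_{k+1}) - g(x*) + (θ/2)‖x* - x_{k+1}‖² ≤ ((θ+q)/2)‖x* - x_k‖², and consequently ‖x_{k+1} - x*‖² ≤ ((θ+q)/(α+θ))‖x_k - x*‖². -/
lemma norm_combo {E : Type*} [NormedAddCommGroup E] [InnerProductSpace ℝ E] (x y z : E) {s t : ℝ}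
    (h : s + t = 1) :
    ‖(s•x + t•y) - z‖^2 = s*‖x-z‖^2 + t*‖y-z‖^2 - s*t*‖x-y‖^2 := by
  have hz : s•x + t•y - z = s•(x-z) + t•(y-z) + ((s+t)-1)•z := by module
  have hxy : x - y = (x-z) - (y-z) := by abel
  rw [hz, h, sub_self, zero_smul, add_zero, norm_add_sq_real, hxy,
    norm_sub_sq_real (x-z) (y-z),
    norm_smul, norm_smul, real_inner_smul_left, real_inner_smul_right,
    Real.norm_eq_abs, Real.norm_eq_abs, mul_pow, mul_pow, sq_abs, sq_abs]
  linear_combination (s*‖x-z‖^2 + t*‖y-z‖^2) * h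

lemma le_of_slack (A B K : ℝ) (hK : 0 ≤ K) (h : ∀ t : ℝ, 0 < t → t ≤ 1 → A ≤ B + t*K) : A ≤ B := by
  by_contra hc
  push_neg at hc
  rcases eq_or_lt_of_le hK with hK0 | hKpos
  · have := h 1 one_pos le_rfl; nlinarith
  · have hAB : 0 < A - B := by linarith
    have ht : (0:ℝ) < min 1 ((A-B)/(2*K)) := lt_min one_pos (by positivity)
    have h1 := h _ ht (min_le_left _ _)
    have key : (A-B)/(2*K)*K = (A-B)/2 := by field_simp
    nlinarith [mul_le_mul_of_nonneg_right (min_le_right 1 ((A-B)/(2*K))) hK]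

theorem two_sided_model_one_step_contraction {d : ℕ} (α q θ : ℝ)
    (hα : 0 < α) (hq : 0 ≤ q) (hθ : q < θ)
    (g gk : EuclideanSpace ℝ (Fin d) → EReal)
    (hproper : (∀ x, g x ≠ ⊥) ∧ ∃ x, g x ≠ ⊤)
    (hclosed : LowerSemicontinuous g)
    (hsc : StrongConvexOnE α g)
    (xstar : EuclideanSpace ℝ (Fin d))
    (hmin : ∀ z, g xstar ≤ g z)
    (hgk_convex : ConvexOnE gk)
    (xk xk1 : EuclideanSpace ℝ (Fin d))
    (hgk_acc : ∀ y, gk y ≤ g y + ((q/2 * ‖y - xk‖^2 : ℝ) : EReal) ∧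
        g y ≤ gk y + ((q/2 * ‖y - xk‖^2 : ℝ) : EReal))
    (hstep : ∀ z, gk xk1 + ((θ/2 * ‖xk1 - xk‖^2 : ℝ) : EReal) ≤
        gk z + ((θ/2 * ‖z - xk‖^2 : ℝ) : EReal)) :
    g xk1 + ((θ/2 * ‖xstar - xk1‖^2 : ℝ) : EReal) ≤
        g xstar + (((θ + q)/2 * ‖xstar - xk‖^2 : ℝ) : EReal) ∧
    ‖xk1 - xstar‖^2 ≤ (θ + q)/(α + θ) * ‖xk - xstar‖^2 := by
  obtain ⟨hbot, x0, hx0⟩ := hproper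
  have hθ0 : 0 < θ := lt_of_le_of_lt hq hθ
  -- g xstar is real
  have hGsT : g xstar ≠ ⊤ := fun h => hx0 (top_le_iff.mp (h ▸ hmin x0))
  obtain ⟨Gs, hGs⟩ : ∃ r : ℝ, g xstar = (r : EReal) :=
    ⟨_, (EReal.coe_toReal hGsT (hbot xstar)).symm⟩
  -- gk xstar is real
  have hKsT : gk xstar ≠ ⊤ := by
    intro h
    have h1 := (hgk_acc xstar).1
    rw [h, hGs, ← EReal.coe_add] at h1
    exact EReal.coe_ne_top _ (top_le_iff.mp h1)
  have hKsB : gk xstar ≠ ⊥ := by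
    intro h
    have h1 := (hgk_acc xstar).2
    rw [h, EReal.bot_add] at h1
    exact hbot xstar (le_bot_iff.mp h1)
  obtain ⟨Ks, hKs⟩ : ∃ r : ℝ, gk xstar = (r : EReal) :=
    ⟨_, (EReal.coe_toReal hKsT hKsB).symm⟩
  -- gk xk1 is real
  have hK1T : gk xk1 ≠ ⊤ := by
    intro h
    have h1 := hstep xstar
    rw [h, EReal.top_add_coe, hKs, ← EReal.coe_add] at h1
    exact EReal.coe_ne_top _ (top_le_iff.mp h1)
  have hK1B : gk xk1 ≠ ⊥ := by
    intro h
    have h1 := (hgk_acc xk1).2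
    rw [h, EReal.bot_add] at h1
    exact hbot xk1 (le_bot_iff.mp h1)
  obtain ⟨K1, hK1⟩ : ∃ r : ℝ, gk xk1 = (r : EReal) :=
    ⟨_, (EReal.coe_toReal hK1T hK1B).symm⟩
  -- g xk1 is real
  have hG1T : g xk1 ≠ ⊤ := by
    intro h
    have h1 := (hgk_acc xk1).2
    rw [h, hK1, ← EReal.coe_add] at h1
    exact EReal.coe_ne_top _ (top_le_iff.mp h1)
  obtain ⟨G1, hG1⟩ : ∃ r : ℝ, g xk1 = (r : EReal) :=
    ⟨_, (EReal.coe_toReal hG1T (hbot xk1)).symm⟩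
  -- key inequality from minimality of xk1 and convexity of gk
  have hkey : K1 + θ/2*‖xk1-xk‖^2 + θ/2*‖xk1-xstar‖^2 ≤ Ks + θ/2*‖xstar-xk‖^2 := by
    apply le_of_slack _ _ (θ/2*‖xk1-xstar‖^2) (by positivity)
    intro t ht0 ht1
    have hconv := hgk_convex xk1 xstar (1-t) t (by linarith) ht0.le (by ring)
    rw [hK1, hKs, ← EReal.coe_mul, ← EReal.coe_mul, ← EReal.coe_add] at hconv
    have hs := hstep ((1-t)•xk1 + t•xstar)
    rw [hK1, ← EReal.coe_add] at hs
    have hchain : ((K1 + θ/2*‖xk1-xk‖^2 : ℝ) : EReal) ≤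
        (((1-t)*K1 + t*Ks + θ/2*‖(1-t)•xk1 + t•xstar - xk‖^2 : ℝ) : EReal) := by
      refine le_trans hs ?_
      rw [EReal.coe_add]
      exact add_le_add_left hconv _
    rw [EReal.coe_le_coe_iff] at hchain
    rw [norm_combo xk1 xstar xk (show (1-t) + t = 1 by ring)] at hchain
    nlinarith [hchain, ht0, sq_nonneg ‖xk1-xstar‖]
  -- accuracy bounds, in ℝ
  have hacc1 := (hgk_acc xk1).2
  rw [hG1, hK1, ← EReal.coe_add, EReal.coe_le_coe_iff] at hacc1
  have hacc2 := (hgk_acc xstar).1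
  rw [hGs, hKs, ← EReal.coe_add, EReal.coe_le_coe_iff] at hacc2
  -- first conclusion, in ℝ
  have hconc1 : G1 + θ/2*‖xstar-xk1‖^2 ≤ Gs + (θ+q)/2*‖xstar-xk‖^2 := by
    rw [norm_sub_rev xstar xk1]
    nlinarith [sq_nonneg ‖xk1-xk‖, hkey, hacc1, hacc2]
  -- strong convexity at the minimizer
  have hsckey : Gs + α/2*‖xk1-xstar‖^2 ≤ G1 := by
    apply le_of_slack _ _ (α/2*‖xk1-xstar‖^2) (by positivity)
    intro t ht0 ht1
    have hcv := hsc xstar xk1 (1-t) t (by linarith) ht0.le (by ring)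
    rw [hGs, hG1, ← EReal.coe_mul, ← EReal.coe_mul, ← EReal.coe_add] at hcv
    have hm := hmin ((1-t)•xstar + t•xk1)
    rw [hGs] at hm
    have hch : ((Gs:ℝ):EReal) + ((α/2*(1-t)*t*‖xstar-xk1‖^2 : ℝ):EReal) ≤
        (((1-t)*Gs + t*G1 : ℝ):EReal) := le_trans (add_le_add_left hm _) hcv
    rw [← EReal.coe_add, EReal.coe_le_coe_iff, norm_sub_rev xstar xk1] at hch
    nlinarith [hch, ht0]
  constructor
  · rw [hG1, hGs, ← EReal.coe_add, ← EReal.coe_add, EReal.coe_le_coe_iff]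
    exact hconc1
  · rw [norm_sub_rev xstar xk1] at hconc1
    rw [norm_sub_rev xstar xk] at hconc1
    rw [div_mul_eq_mul_div, le_div_iff₀ (by linarith : (0:ℝ) < α + θ)]
    nlinarith [hconc1, hsckey]
end

section
/- Let h : R^m → R be L-Lipschitz, and c : R^d → R^m be C¹ with β-Lipschitz Jacobian on a convex set D. Then for all x, y ∈ D, |h(c(y)) - h(c(x) + ∇c(x)(y - x))| ≤ (βL/2)‖x - y‖². Hence the prox-linear model y ↦ h(c(x) + ∇c(x)(y-x)) is a two-sided model with parameter q = βL. -/
theorem prox_linear_two_sided_model {d m : ℕ} (L β : ℝ) (hL : 0 ≤ L) (hβ : 0 ≤ β)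
    (D : Set (EuclideanSpace ℝ (Fin d))) (hD : Convex ℝ D)
    (h : EuclideanSpace ℝ (Fin m) → ℝ)
    (hLip : ∀ u v, |h u - h v| ≤ L * ‖u - v‖)
    (c : EuclideanSpace ℝ (Fin d) → EuclideanSpace ℝ (Fin m))
    (c' : EuclideanSpace ℝ (Fin d) → (EuclideanSpace ℝ (Fin d) →L[ℝ] EuclideanSpace ℝ (Fin m)))
    (hderiv : ∀ x ∈ D, HasFDerivAt c (c' x) x)
    (hJacLip : ∀ u ∈ D, ∀ v ∈ D, ‖c' u - c' v‖ ≤ β * ‖u - v‖) :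
    ∀ x ∈ D, ∀ y ∈ D,
      |h (c y) - h (c x + c' x (y - x))| ≤ β * L / 2 * ‖x - y‖^2 := by
  intro x hx y hy
  set v := y - x with hv
  have hmem : ∀ t ∈ Set.Icc (0:ℝ) 1, x + t • v ∈ D := by
    intro t ht
    have := hD hx hy (by linarith [ht.1, ht.2] : (0:ℝ) ≤ 1 - t) ht.1 (by linarith [ht.2])
    convert this using 1
    simp [hv, smul_sub, smul_smul]
    module
  set g : ℝ → EuclideanSpace ℝ (Fin m) := fun t => c (x + t • v) - c x - t • c' x v with hg
  have hg' : ∀ t ∈ Set.Icc (0:ℝ) 1,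
      HasDerivAt g ((c' (x + t • v) - c' x) v) t := by
    intro t ht
    have hline : HasDerivAt (fun t : ℝ => x + t • v) v t := by
      simpa using ((hasDerivAt_id t).smul_const v).const_add x
    have h1 : HasDerivAt (fun t : ℝ => c (x + t • v)) (c' (x + t • v) v) t :=
      (hderiv _ (hmem t ht)).comp_hasDerivAt t hline
    have h2 : HasDerivAt (fun t : ℝ => c x + t • c' x v) (c' x v) t := by
      simpa using ((hasDerivAt_id t).smul_const (c' x v)).const_add (c x)
    have := h1.sub h2
    have heq : g = fun s : ℝ => c (x + s • v) - (c x + s • c' x v) := by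
      funext s; simp only [hg]; abel
    rw [heq]
    simpa [Pi.sub_def] using this
  have bound : ∀ t ∈ Set.Ico (0:ℝ) 1, ‖(c' (x + t • v) - c' x) v‖ ≤ (β * ‖v‖^2) * t := by
    intro t ht
    calc ‖(c' (x + t • v) - c' x) v‖ ≤ ‖c' (x + t • v) - c' x‖ * ‖v‖ :=
          (c' (x + t • v) - c' x).le_opNorm v
      _ ≤ (β * ‖(x + t • v) - x‖) * ‖v‖ := by
          gcongr
          exact hJacLip _ (hmem t ⟨ht.1, ht.2.le⟩) _ hx
      _ = (β * ‖v‖^2) * t := by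
          simp [norm_smul, abs_of_nonneg ht.1, pow_two]; ring
  have hB : ∀ t : ℝ, HasDerivAt (fun t => β * ‖v‖^2 / 2 * t^2) ((β * ‖v‖^2) * t) t := by
    intro t
    have := (hasDerivAt_pow 2 t).const_mul (β * ‖v‖^2 / 2)
    exact this.congr_deriv (by norm_num; ring)
  have key : ‖g 1‖ ≤ β * ‖v‖^2 / 2 * 1^2 := by
    refine image_norm_le_of_norm_deriv_right_le_deriv_boundary
      (fun t ht => (hg' t ht).continuousAt.continuousWithinAt)
      (fun t ht => ((hg' t ⟨ht.1, ht.2.le⟩).hasDerivWithinAt)) ?_ hB bound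
      (Set.right_mem_Icc.mpr zero_le_one)
    simp [hg]
  have hgval : c y = g 1 + (c x + c' x v) := by
    have hxy : x + v = y := by simp [hv]
    simp only [hg, one_smul, hxy]
    abel
  calc |h (c y) - h (c x + c' x (y - x))| ≤ L * ‖c y - (c x + c' x (y - x))‖ := hLip _ _
    _ = L * ‖g 1‖ := by rw [hgval]; congr 2; abel
    _ ≤ L * (β * ‖v‖^2 / 2) := by
        have hk := key; rw [one_pow, mul_one] at hk
        exact mul_le_mul_of_nonneg_left hk hL
    _ = β * L / 2 * ‖x - y‖^2 := by rw [hv, ← norm_neg, neg_sub]; ring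
end

section
/- Suppose g is C² on B_r(x) with L₂-Lipschitz Hessian there, ‖∇g(x)‖ ≤ ε₁, λ_min(∇²g(x)) ≥ -ε₂, and r = 3ε₂/(2L₂). Then for all y ∈ B_r(x): g(y) ≥ g(x) + ⟨∇g(x), y - x⟩ - (3/4)ε₂‖y - x‖². -/
open scoped RealInnerProductSpace

set_option maxHeartbeats 1000000 in
theorem quadratic_lower_bound_at_second_order_point {d : ℕ} (L₂ ε₁ ε₂ : ℝ)
    (hL₂ : 0 < L₂) (hε₁ : 0 < ε₁) (hε₂ : 0 < ε₂)
    (x : EuclideanSpace ℝ (Fin d)) (r : ℝ) (hr : r = 3 * ε₂ / (2 * L₂))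
    (g : EuclideanSpace ℝ (Fin d) → ℝ)
    (g' : EuclideanSpace ℝ (Fin d) → EuclideanSpace ℝ (Fin d))
    (H : EuclideanSpace ℝ (Fin d) → (EuclideanSpace ℝ (Fin d) →L[ℝ] EuclideanSpace ℝ (Fin d)))
    (hgrad : ∀ y ∈ Metric.closedBall x r,
      HasGradientWithinAt g (g' y) (Metric.closedBall x r) y)
    (hhess : ∀ y ∈ Metric.closedBall x r,
      HasFDerivWithinAt g' (H y) (Metric.closedBall x r) y)
    (hHLip : ∀ u ∈ Metric.closedBall x r, ∀ v ∈ Metric.closedBall x r,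
      ‖H u - H v‖ ≤ L₂ * ‖u - v‖)
    (hgradsmall : ‖g' x‖ ≤ ε₁)
    (hcurv : ∀ v : EuclideanSpace ℝ (Fin d), inner ℝ (H x v) v ≥ -ε₂ * ‖v‖^2) :
    ∀ y ∈ Metric.closedBall x r,
      g y ≥ g x + inner ℝ (g' x) (y - x) - (3/4) * ε₂ * ‖y - x‖^2 := by
  intro y hy
  set v : EuclideanSpace ℝ (Fin d) := y - x with hv
  have hr0 : 0 ≤ r := by rw [hr]; positivity
  have hnv : ‖v‖ ≤ r := by
    simpa [hv, dist_eq_norm] using hy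
  have hnv0 : (0:ℝ) ≤ ‖v‖ := norm_nonneg _
  set c : ℝ → EuclideanSpace ℝ (Fin d) := fun t => x + t • v with hc
  have hc_mem : ∀ t ∈ Set.Icc (0:ℝ) 1, c t ∈ Metric.closedBall x r := by
    intro t ht
    simp only [Metric.mem_closedBall, hc, dist_eq_norm, add_sub_cancel_left, norm_smul,
      Real.norm_eq_abs, abs_of_nonneg ht.1]
    nlinarith [ht.1, ht.2]
  have hc_deriv : ∀ t : ℝ, HasDerivAt c v t := by
    intro t
    have := ((hasDerivAt_id t).smul_const v).const_add x
    simp only [id_eq, one_smul] at this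
    exact this
  have hc_dist : ∀ t ∈ Set.Icc (0:ℝ) 1, ‖c t - x‖ = t * ‖v‖ := by
    intro t ht
    simp [hc, norm_smul, abs_of_nonneg ht.1]
  have hmaps : Set.MapsTo c (Set.Icc (0:ℝ) 1) (Metric.closedBall x r) := fun t ht => hc_mem t ht
  -- φ' t = ⟪g' (c t), v⟫
  set ψ : ℝ → ℝ := fun t => (innerSL ℝ v) (g' (c t)) with hψdef
  have hψx : ∀ t, ψ t = ⟪g' (c t), v⟫ := by
    intro t; simp only [hψdef, innerSL_apply_apply]; exact real_inner_comm _ _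
  have hφ : ∀ t ∈ Set.Icc (0:ℝ) 1,
      HasDerivWithinAt (fun t => g (c t)) (ψ t) (Set.Icc 0 1) t := by
    intro t ht
    have h1 := (hgrad _ (hc_mem t ht)).hasFDerivWithinAt
    have h2 := h1.comp_hasDerivWithinAt t ((hc_deriv t).hasDerivWithinAt) hmaps
    refine HasDerivWithinAt.congr_deriv h2 ?_
    rw [hψx, InnerProductSpace.toDual_apply_apply]
  have hψ : ∀ t ∈ Set.Icc (0:ℝ) 1,
      HasDerivWithinAt ψ (⟪v, (H (c t)) v⟫) (Set.Icc 0 1) t := by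
    intro t ht
    have h1 := (innerSL ℝ v).hasFDerivAt.comp_hasFDerivWithinAt (c t)
        (hhess _ (hc_mem t ht))
    have h2 := h1.comp_hasDerivWithinAt t ((hc_deriv t).hasDerivWithinAt) hmaps
    refine HasDerivWithinAt.congr_deriv h2 ?_
    rw [ContinuousLinearMap.comp_apply, innerSL_apply_apply]
  -- curvature lower bound along the segment
  have hcurv_seg : ∀ t ∈ Set.Icc (0:ℝ) 1,
      ⟪v, (H (c t)) v⟫ ≥ -ε₂ * ‖v‖^2 - L₂ * t * ‖v‖^3 := by
    intro t ht
    have hsplit : ⟪v, (H (c t)) v⟫ = ⟪(H x) v, v⟫ + ⟪(H (c t) - H x) v, v⟫ := by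
      rw [real_inner_comm]
      simp [ContinuousLinearMap.sub_apply, inner_sub_left]
    have hbound : |⟪(H (c t) - H x) v, v⟫| ≤ L₂ * t * ‖v‖^3 := by
      calc |⟪(H (c t) - H x) v, v⟫| ≤ ‖(H (c t) - H x) v‖ * ‖v‖ := abs_real_inner_le_norm _ _
        _ ≤ ‖H (c t) - H x‖ * ‖v‖ * ‖v‖ := by
            gcongr; exact (H (c t) - H x).le_opNorm v
        _ ≤ (L₂ * (t * ‖v‖)) * ‖v‖ * ‖v‖ := by
            have hH := hHLip _ (hc_mem t ht) x (by simp [hr0])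
            rw [hc_dist t ht] at hH
            exact mul_le_mul_of_nonneg_right (mul_le_mul_of_nonneg_right hH hnv0) hnv0
        _ = L₂ * t * ‖v‖^3 := by ring
    have h1 := hcurv v
    have h2 := abs_le.mp hbound
    rw [hsplit]
    nlinarith [h2.1]
  -- second layer: G t := ψ t - ψ 0 + ε₂‖v‖² t + (L₂/2)‖v‖³ t²  is nonneg on [0,1]
  set G : ℝ → ℝ := fun t => ψ t - ⟪g' x, v⟫ + ε₂ * ‖v‖^2 * t + L₂/2 * ‖v‖^3 * t^2 with hGdef
  have hG : ∀ t ∈ Set.Icc (0:ℝ) 1,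
      HasDerivWithinAt G (⟪v, (H (c t)) v⟫ + ε₂ * ‖v‖^2 + L₂ * ‖v‖^3 * t) (Set.Icc 0 1) t := by
    intro t ht
    have := ((hψ t ht).sub_const (⟪g' x, v⟫)).add
      (((hasDerivWithinAt_id t _).const_mul (ε₂ * ‖v‖^2)).add
        (((hasDerivWithinAt_id t (Set.Icc 0 1)).pow 2).const_mul (L₂/2 * ‖v‖^3)))
    refine (this.congr (fun s _ => by simp only [hGdef, Pi.add_apply, Pi.sub_apply, Pi.pow_apply, id_eq]; ring) (by simp only [hGdef, Pi.add_apply, Pi.sub_apply, Pi.pow_apply, id_eq]; ring)).congr_deriv ?_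
    simp only [id_eq]
    push_cast
    ring
  have hGmono : MonotoneOn G (Set.Icc (0:ℝ) 1) := by
    apply monotoneOn_of_hasDerivWithinAt_nonneg (convex_Icc 0 1)
      (f' := fun t => ⟪v, (H (c t)) v⟫ + ε₂ * ‖v‖^2 + L₂ * ‖v‖^3 * t)
      (fun t ht => (hG t ht).continuousWithinAt)
    · intro t ht
      rw [interior_Icc] at ht ⊢
      exact (hG t (Set.Ioo_subset_Icc_self ht)).mono Set.Ioo_subset_Icc_self
    · intro t ht
      rw [interior_Icc] at ht
      have := hcurv_seg t (Set.Ioo_subset_Icc_self ht)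
      nlinarith [ht.1]
  have hc0 : c 0 = x := by simp [hc]
  have hG0 : G 0 = 0 := by
    simp only [hGdef]
    rw [hψx, hc0]
    ring
  have hGnonneg : ∀ t ∈ Set.Icc (0:ℝ) 1, 0 ≤ G t := by
    intro t ht
    have := hGmono (Set.left_mem_Icc.mpr zero_le_one) ht ht.1
    rwa [hG0] at this
  -- first layer: F t := g(c t) - t⟪g'x,v⟫ + ε₂/2‖v‖²t² + L₂/6‖v‖³t³ is monotone
  set F : ℝ → ℝ := fun t => g (c t) - t * ⟪g' x, v⟫ + ε₂/2 * ‖v‖^2 * t^2 + L₂/6 * ‖v‖^3 * t^3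
    with hFdef
  have hF : ∀ t ∈ Set.Icc (0:ℝ) 1, HasDerivWithinAt F (G t) (Set.Icc 0 1) t := by
    intro t ht
    have := ((hφ t ht).sub ((hasDerivWithinAt_id t _).mul_const (⟪g' x, v⟫))).add
      ((((hasDerivWithinAt_id t (Set.Icc 0 1)).pow 2).const_mul (ε₂/2 * ‖v‖^2)).add
        (((hasDerivWithinAt_id t (Set.Icc 0 1)).pow 3).const_mul (L₂/6 * ‖v‖^3)))
    refine (this.congr (fun s _ => by simp only [hFdef, Pi.add_apply, Pi.sub_apply, Pi.mul_apply, Pi.pow_apply, id_eq]; ring) (by simp only [hFdef, Pi.add_apply, Pi.sub_apply, Pi.mul_apply, Pi.pow_apply, id_eq]; ring)).congr_deriv ?_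
    simp only [hGdef, hψx, id_eq]
    push_cast
    ring
  have hFmono : MonotoneOn F (Set.Icc (0:ℝ) 1) := by
    apply monotoneOn_of_hasDerivWithinAt_nonneg (convex_Icc 0 1) (f' := G)
      (fun t ht => (hF t ht).continuousWithinAt)
    · intro t ht
      rw [interior_Icc] at ht ⊢
      exact (hF t (Set.Ioo_subset_Icc_self ht)).mono Set.Ioo_subset_Icc_self
    · intro t ht
      rw [interior_Icc] at ht
      exact hGnonneg t (Set.Ioo_subset_Icc_self ht)
  have hF01 : F 0 ≤ F 1 :=
    hFmono (Set.left_mem_Icc.mpr zero_le_one) (Set.right_mem_Icc.mpr zero_le_one) zero_le_one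
  have hc1 : c 1 = y := by simp [hc, hv]
  have hkey : g y ≥ g x + ⟪g' x, v⟫ - ε₂/2 * ‖v‖^2 - L₂/6 * ‖v‖^3 := by
    have hF0 : F 0 = g x := by simp [hFdef, hc0]
    have hF1 : F 1 = g y - ⟪g' x, v⟫ + ε₂/2 * ‖v‖^2 + L₂/6 * ‖v‖^3 := by
      simp [hFdef, hc1]
    rw [hF0, hF1] at hF01
    linarith
  have hcube : L₂/6 * ‖v‖^3 ≤ ε₂/4 * ‖v‖^2 := by
    have : ‖v‖^3 ≤ r * ‖v‖^2 := by nlinarith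
    calc L₂/6 * ‖v‖^3 ≤ L₂/6 * (r * ‖v‖^2) := by nlinarith
      _ = ε₂/4 * ‖v‖^2 := by rw [hr]; field_simp; ring
  have : (inner ℝ (g' x) (y - x) : ℝ) = ⟪g' x, v⟫ := by rw [hv]
  rw [this]
  nlinarith [hkey, hcube]
end
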